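/- Let ρ : (0,1] → ℝ be a nonnegative measurable function such that r ↦ r³ρ(r) is integrable on (0,1) and satisfies the second-moment normalization ∫₀¹ r³ρ(r) dr = 2/π. Then for every δ > 0 and every k ∈ ℤ² \ {0}, the 2D nonlocal Fourier symbol satisfies the lower bound λ_δ(k) ≥ |k|² − (δ² |k|⁴)/16. -/

import Mathlib

open Real MeasureTheory

lemma aux_sin_lb (x : ℝ) (hx : 0 ≤ x) : x - x ^ 3 / 6 ≤ Real.sin x := by
  set f : ℝ → ℝ := fun y => Real.sin y - y + y ^ 3 / 6 with hf
  have hderiv : ∀ y : ℝ, HasDerivAt f (Real.cos y - 1 + y ^ 2 / 2) y := by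
    intro y
    have h1 := (Real.hasDerivAt_sin y).sub (hasDerivAt_id y)
    have h2 := (hasDerivAt_pow 3 y).div_const 6
    have h3 := h1.add h2
    refine h3.congr_deriv ?_
    push_cast
    ring
  have hmono : MonotoneOn f (Set.Ici 0) := by
    apply monotoneOn_of_deriv_nonneg (convex_Ici 0)
    · exact (continuous_sin.sub continuous_id |>.add (by fun_prop)).continuousOn
    · intro y _; exact (hderiv y).differentiableAt.differentiableWithinAt
    · intro y _
      rw [(hderiv y).deriv]
      have := Real.one_sub_sq_div_two_le_cos (x := y)
      linarith
  have h0 : f 0 ≤ f x := hmono Set.self_mem_Ici hx hx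
  simp only [hf, Real.sin_zero] at h0
  norm_num at h0
  linarith

lemma aux_cos_ub (x : ℝ) : Real.cos x ≤ 1 - x ^ 2 / 2 + x ^ 4 / 24 := by
  suffices h : ∀ y : ℝ, 0 ≤ y → Real.cos y ≤ 1 - y ^ 2 / 2 + y ^ 4 / 24 by
    rcases le_total 0 x with hx | hx
    · exact h x hx
    · have := h (-x) (by linarith)
      rw [Real.cos_neg] at this
      have h2 : (-x) ^ 2 = x ^ 2 := by ring
      have h4 : (-x) ^ 4 = x ^ 4 := by ring
      rw [h2, h4] at this
      exact this
  intro y hy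
  set g : ℝ → ℝ := fun y => 1 - y ^ 2 / 2 + y ^ 4 / 24 - Real.cos y with hg
  have hderiv : ∀ z : ℝ, HasDerivAt g (-z + z ^ 3 / 6 - (-Real.sin z)) z := by
    intro z
    have h2 := ((hasDerivAt_pow 2 z).div_const 2)
    have h4 := ((hasDerivAt_pow 4 z).div_const 24)
    have h3 := (((hasDerivAt_const z (1:ℝ)).sub h2).add h4).sub (Real.hasDerivAt_cos z)
    refine h3.congr_deriv ?_
    push_cast
    ring
  have hmono : MonotoneOn g (Set.Ici 0) := by
    apply monotoneOn_of_deriv_nonneg (convex_Ici 0)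
    · exact (by fun_prop : Continuous g).continuousOn
    · intro z _; exact (hderiv z).differentiableAt.differentiableWithinAt
    · intro z hz
      rw [(hderiv z).deriv]
      have hz0 : (0:ℝ) ≤ z := le_of_lt (by simpa using hz)
      have := aux_sin_lb z hz0
      linarith
  have h0 : g 0 ≤ g y := hmono Set.self_mem_Ici hy hy
  simp only [hg, Real.cos_zero] at h0
  norm_num at h0
  linarith

lemma one_sub_cos_lb (x : ℝ) : x ^ 2 / 2 - x ^ 4 / 24 ≤ 1 - Real.cos x := by
  have := aux_cos_ub x; linarith

lemma one_sub_cos_ub (x : ℝ) : 1 - Real.cos x ≤ x ^ 2 / 2 := by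
  have := Real.one_sub_sq_div_two_le_cos (x := x); linarith

/-- Euclidean norm of a nonzero integer vector `k ∈ ℤ²`. -/
noncomputable def knorm2 (k : ℤ × ℤ) : ℝ :=
  Real.sqrt ((k.1 : ℝ) ^ 2 + (k.2 : ℝ) ^ 2)

/-- The 2D Fourier symbol of the nonlocal diffusion operator:
`λ_δ(k) = (4/δ²) ∫₀^{π/2} ∫₀¹ r ρ(r) (1 − cos(r δ |k| cos θ)) dr dθ`. -/
noncomputable def lambdaDelta2 (ρ : ℝ → ℝ) (δ κ : ℝ) : ℝ :=
  (4 / δ ^ 2) * ∫ θ in (0:ℝ)..(π / 2), ∫ r in (0:ℝ)..1,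
    r * ρ r * (1 - Real.cos (r * δ * κ * Real.cos θ))

theorem lambdaDelta2_lower_bound (ρ : ℝ → ℝ) (hmeas : Measurable ρ)
    (hnonneg : ∀ r ∈ Set.Ioc (0:ℝ) 1, 0 ≤ ρ r)
    (hint : IntervalIntegrable (fun r => r ^ 3 * ρ r) volume 0 1)
    (hmoment : (∫ r in (0:ℝ)..1, r ^ 3 * ρ r) = 2 / π)
    (δ : ℝ) (hδ : 0 < δ) (k : ℤ × ℤ) (hk : k ≠ 0) :
    (knorm2 k) ^ 2 - δ ^ 2 * (knorm2 k) ^ 4 / 16 ≤ lambdaDelta2 ρ δ (knorm2 k) := by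
  set κ := knorm2 k with hκ
  have hπ : (0:ℝ) < π := Real.pi_pos
  set F : ℝ → ℝ → ℝ := fun θ r => r * ρ r * (1 - Real.cos (r * δ * κ * Real.cos θ)) with hF
  have huIoc : Set.uIoc (0:ℝ) 1 = Set.Ioc 0 1 := Set.uIoc_of_le (by norm_num)
  have hIoc : IntegrableOn (fun r => r ^ 3 * ρ r) (Set.Ioc (0:ℝ) 1) volume :=
    (intervalIntegrable_iff_integrableOn_Ioc_of_le (by norm_num)).mp hint
  have hFmeas : ∀ (θ : ℝ) (s : Set ℝ), AEStronglyMeasurable (F θ) (volume.restrict s) := by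
    intro θ s
    have : Measurable (F θ) := by
      apply Measurable.mul
      · exact measurable_id.mul hmeas
      · fun_prop
    exact this.aestronglyMeasurable
  have hbound : ∀ (θ : ℝ), ∀ r ∈ Set.Ioc (0:ℝ) 1,
      ‖F θ r‖ ≤ (δ*κ)^2/2 * (r^3 * ρ r) := by
    intro θ r hr
    have hρ := hnonneg r hr
    have hcle := Real.cos_le_one (r * δ * κ * Real.cos θ)
    have h1 : 0 ≤ F θ r :=
      mul_nonneg (mul_nonneg hr.1.le hρ) (by linarith)
    rw [Real.norm_of_nonneg h1]
    have h2 := one_sub_cos_ub (r * δ * κ * Real.cos θ)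
    have hr3 : 0 ≤ r^3 * ρ r := mul_nonneg (pow_nonneg hr.1.le 3) hρ
    have hc2 : Real.cos θ ^ 2 ≤ 1 := Real.cos_sq_le_one θ
    have hF1 : F θ r ≤ r * ρ r * ((r * δ * κ * Real.cos θ)^2/2) :=
      mul_le_mul_of_nonneg_left h2 (mul_nonneg hr.1.le hρ)
    nlinarith [mul_nonneg (mul_nonneg hr3 (sq_nonneg (δ*κ))) (sub_nonneg.mpr hc2)]
  have hFint : ∀ θ : ℝ, IntervalIntegrable (F θ) volume 0 1 := by
    intro θ
    apply (hint.const_mul ((δ*κ)^2/2)).mono_fun' (hFmeas θ _)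
    rw [huIoc, Filter.EventuallyLE, ae_restrict_iff' measurableSet_Ioc]
    exact Filter.Eventually.of_forall (fun r hr => hbound θ r hr)
  have hinner : ∀ θ : ℝ,
      (2/π) * ((δ*κ*Real.cos θ)^2/2 - (δ*κ*Real.cos θ)^4/24) ≤ ∫ r in (0:ℝ)..1, F θ r := by
    intro θ
    set a := δ * κ * Real.cos θ with ha
    have hLint : IntervalIntegrable (fun r => (a^2/2 - a^4/24) * (r^3 * ρ r)) volume 0 1 :=
      hint.const_mul _
    have hle : ∀ r ∈ Set.Icc (0:ℝ) 1, (a^2/2 - a^4/24) * (r^3 * ρ r) ≤ F θ r := by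
      intro r hr
      rcases eq_or_lt_of_le hr.1 with h0 | h0
      · rw [← h0]; simp [hF]
      · have hρ := hnonneg r ⟨h0, hr.2⟩
        have hx := one_sub_cos_lb (r * a)
        have harg : r * δ * κ * Real.cos θ = r * a := by rw [ha]; ring
        have hFr : F θ r = r * ρ r * (1 - Real.cos (r * a)) := by rw [hF]; simp only [harg]
        rw [hFr]
        have hF1 : r * ρ r * ((r*a)^2/2 - (r*a)^4/24) ≤ r * ρ r * (1 - Real.cos (r * a)) :=
          mul_le_mul_of_nonneg_left hx (mul_nonneg h0.le hρ)
        have hF2 : 0 ≤ r^3 * ρ r * (1 - r^2) * a^4 :=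
          mul_nonneg (mul_nonneg (mul_nonneg (pow_nonneg h0.le 3) hρ)
            (by nlinarith [hr.2, h0.le])) (by positivity)
        nlinarith [hF1, hF2]
    have hmono := intervalIntegral.integral_mono_on (by norm_num : (0:ℝ) ≤ 1) hLint (hFint θ) hle
    rw [intervalIntegral.integral_const_mul, hmoment] at hmono
    calc (2/π) * (a^2/2 - a^4/24) = (a^2/2 - a^4/24) * (2/π) := by ring
      _ ≤ _ := hmono
  have hG : Continuous (fun θ => ∫ r in (0:ℝ)..1, F θ r) := by
    have heq : (fun θ => ∫ r in (0:ℝ)..1, F θ r)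
        = fun θ => ∫ r in Set.Ioc (0:ℝ) 1, F θ r :=
      funext fun θ => intervalIntegral.integral_of_le (by norm_num)
    rw [heq]
    apply MeasureTheory.continuous_of_dominated (bound := fun r => (δ*κ)^2/2 * (r^3 * ρ r))
    · exact fun θ => hFmeas θ _
    · intro θ
      rw [ae_restrict_iff' measurableSet_Ioc]
      exact Filter.Eventually.of_forall (fun r hr => hbound θ r hr)
    · exact hIoc.const_mul _
    · exact Filter.Eventually.of_forall (fun r => by simp only [hF]; fun_prop)
  have hH : Continuous (fun θ : ℝ => (2/π)*((δ*κ*Real.cos θ)^2/2 - (δ*κ*Real.cos θ)^4/24)) := by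
    fun_prop
  have houter : ∫ θ in (0:ℝ)..(π/2), (2/π)*((δ*κ*Real.cos θ)^2/2 - (δ*κ*Real.cos θ)^4/24)
      ≤ ∫ θ in (0:ℝ)..(π/2), ∫ r in (0:ℝ)..1, F θ r :=
    intervalIntegral.integral_mono_on (by positivity) (hH.intervalIntegrable _ _)
      (hG.intervalIntegrable _ _) (fun θ _ => hinner θ)
  have hcos2 : ∫ θ in (0:ℝ)..(π/2), Real.cos θ ^ 2 = π/4 := by
    rw [integral_cos_sq]
    simp [Real.cos_pi_div_two, Real.sin_pi_div_two]
    ring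
  have hcos4 : ∫ θ in (0:ℝ)..(π/2), Real.cos θ ^ 4 = 3*π/16 := by
    have h := integral_cos_pow (a := (0:ℝ)) (b := π/2) 2
    norm_num at h
    rw [h]
    ring
  have hval : ∫ θ in (0:ℝ)..(π/2), (2/π)*((δ*κ*Real.cos θ)^2/2 - (δ*κ*Real.cos θ)^4/24)
      = (δ*κ)^2/4 - (δ*κ)^4/64 := by
    have hexp : ∀ θ : ℝ, (2/π)*((δ*κ*Real.cos θ)^2/2 - (δ*κ*Real.cos θ)^4/24)
        = ((δ*κ)^2/π) * Real.cos θ^2 - ((δ*κ)^4/(12*π)) * Real.cos θ^4 := fun θ => by ring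
    simp_rw [hexp]
    rw [intervalIntegral.integral_sub
        ((Continuous.intervalIntegrable (by fun_prop) _ _))
        ((Continuous.intervalIntegrable (by fun_prop) _ _)),
      intervalIntegral.integral_const_mul, intervalIntegral.integral_const_mul, hcos2, hcos4]
    field_simp
    ring
  have hfinal : (δ*κ)^2/4 - (δ*κ)^4/64 ≤ ∫ θ in (0:ℝ)..(π/2), ∫ r in (0:ℝ)..1, F θ r := by
    rw [← hval]; exact houter
  have h4 : (0:ℝ) ≤ 4/δ^2 := by positivity
  have hlam : lambdaDelta2 ρ δ κ = (4/δ^2) * ∫ θ in (0:ℝ)..(π/2), ∫ r in (0:ℝ)..1, F θ r := rfl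
  rw [hlam]
  calc κ^2 - δ^2*κ^4/16 = (4/δ^2) * ((δ*κ)^2/4 - (δ*κ)^4/64) := by
        field_simp
        ring
    _ ≤ _ := mul_le_mul_of_nonneg_left hfinal h4
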